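/- Let O be a complete discrete valuation ring with uniformizer ϖ and fraction field K, and let M be a cofinitely generated O-module, i.e. M ≅ (K⧸O)^d ⊕ T as O-modules with d ≥ 0 and T finite. Let f : M → M be an O-linear endomorphism whose kernel is finite. Then the cokernel M⧸f(M) is finite, of cardinality at most the cardinality of T. -/

import Mathlib

open LinearMap Submodule

/-! ### Auxiliary lemmas -/

lemma aux_finite_of_addHom {G H : Type*} [AddGroup G] [AddGroup H] (φ : G →+ H)
    [Finite H] (hk : Finite φ.ker) : Finite G := by
  have : Finite (G ⧸ φ.ker) :=
    Finite.of_injective _ (QuotientAddGroup.kerLift_injective φ)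
  exact Finite.of_addSubgroup_quotient (H := φ.ker)

lemma aux_card_of_surj {G H : Type*} [AddGroup G] [AddGroup H] (φ : G →+ H)
    (hs : Function.Surjective φ) :
    Nat.card G = Nat.card H * Nat.card φ.ker := by
  rw [AddSubgroup.card_eq_card_quotient_mul_card_addSubgroup φ.ker]
  congr 1
  exact Nat.card_congr (QuotientAddGroup.quotientKerEquivOfSurjective φ hs).toEquiv

section Counting
variable {O : Type*} [CommRing O] {N : Type*} [AddCommGroup N] [Module O N] {ϖ : O}

lemma aux_mem_inf_tors (m : ℕ) (W : Submodule O N) (x : N) :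
    x ∈ W ⊓ Submodule.torsionBy O N (ϖ ^ m) ↔ x ∈ W ∧ ϖ ^ m • x = 0 := by
  rw [Submodule.mem_inf, Submodule.mem_torsionBy_iff]

lemma aux_mult (W : Submodule O N) (hdiv : ∀ x ∈ W, ∃ y ∈ W, ϖ • y = x) (n : ℕ) :
    Nat.card ↥(W ⊓ Submodule.torsionBy O N (ϖ ^ (n + 1))) =
      Nat.card ↥(W ⊓ Submodule.torsionBy O N (ϖ ^ n)) *
        Nat.card ↥(W ⊓ Submodule.torsionBy O N (ϖ ^ 1)) := by
  set φ : ↥(W ⊓ Submodule.torsionBy O N (ϖ ^ (n + 1))) →+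
      ↥(W ⊓ Submodule.torsionBy O N (ϖ ^ n)) :=
    { toFun := fun x => ⟨ϖ • (x : N), by
        rcases (aux_mem_inf_tors _ _ _).1 x.2 with ⟨h1, h2⟩
        refine (aux_mem_inf_tors _ _ _).2 ⟨W.smul_mem _ h1, ?_⟩
        rw [smul_smul, ← pow_succ]
        exact h2⟩,
      map_zero' := by ext; simp
      map_add' := by intro x y; ext; simp [smul_add] } with hφ
  have hsurj : Function.Surjective φ := by
    rintro ⟨x, hx⟩
    rcases (aux_mem_inf_tors _ _ _).1 hx with ⟨h1, h2⟩
    obtain ⟨y, hyW, hy⟩ := hdiv x h1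
    refine ⟨⟨y, (aux_mem_inf_tors _ _ _).2 ⟨hyW, ?_⟩⟩, ?_⟩
    · rw [pow_succ, mul_smul, hy]
      exact h2
    · exact Subtype.ext hy
  have hker : Nat.card φ.ker = Nat.card ↥(W ⊓ Submodule.torsionBy O N (ϖ ^ 1)) := by
    refine Nat.card_congr ?_
    refine
      { toFun := fun x => ⟨(x : ↥(W ⊓ Submodule.torsionBy O N (ϖ ^ (n + 1)))).1, ?_⟩
        invFun := fun x => ⟨⟨(x : N), ?_⟩, ?_⟩
        left_inv := fun x => Subtype.ext (Subtype.ext rfl)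
        right_inv := fun x => Subtype.ext rfl }
    · rcases (aux_mem_inf_tors _ _ _).1 (x : ↥(W ⊓ Submodule.torsionBy O N (ϖ ^ (n + 1)))).2
        with ⟨h1, _⟩
      have h2 : ϖ • ((x : ↥(W ⊓ Submodule.torsionBy O N (ϖ ^ (n + 1)))) : N) = 0 :=
        congrArg Subtype.val x.2
      exact (aux_mem_inf_tors _ _ _).2 ⟨h1, by rw [pow_one]; exact h2⟩
    · rcases (aux_mem_inf_tors _ _ _).1 x.2 with ⟨h1, h2⟩
      have h2' : ϖ • (x : N) = 0 := by simpa using h2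
      refine (aux_mem_inf_tors _ _ _).2 ⟨h1, ?_⟩
      rw [pow_succ, mul_smul, h2', smul_zero]
    · rcases (aux_mem_inf_tors _ _ _).1 x.2 with ⟨h1, h2⟩
      have h2' : ϖ • (x : N) = 0 := by simpa using h2
      exact Subtype.ext h2'
  rw [aux_card_of_surj φ hsurj, hker]

lemma aux_pow (W : Submodule O N) (hdiv : ∀ x ∈ W, ∃ y ∈ W, ϖ • y = x) (n : ℕ) :
    Nat.card ↥(W ⊓ Submodule.torsionBy O N (ϖ ^ n)) =
      Nat.card ↥(W ⊓ Submodule.torsionBy O N (ϖ ^ 1)) ^ n := by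
  induction n with
  | zero =>
    have hsub : Subsingleton ↥(W ⊓ Submodule.torsionBy O N ((ϖ : O) ^ 0)) := by
      constructor
      rintro ⟨x, hx⟩ ⟨y, hy⟩
      rcases (aux_mem_inf_tors _ _ _).1 hx with ⟨-, hx2⟩
      rcases (aux_mem_inf_tors _ _ _).1 hy with ⟨-, hy2⟩
      rw [pow_zero, one_smul] at hx2 hy2
      simp only [Subtype.mk.injEq]
      rw [hx2, hy2]
    have h1 : Nat.card ↥(W ⊓ Submodule.torsionBy O N ((ϖ : O) ^ 0)) = 1 :=
      Nat.card_eq_one_iff_unique.2 ⟨hsub, ⟨0⟩⟩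
    rw [h1, pow_zero]
  | succ n ih => rw [aux_mult W hdiv n, ih, ← pow_succ]

end Counting

lemma aux_nat_eq (a s c : ℕ) (hs : 1 ≤ s) (hsa : s ≤ a)
    (h : ∀ n : ℕ, a ^ n ≤ c * s ^ n) : a = s := by
  by_contra hne
  have hlt : s < a := lt_of_le_of_ne hsa (Ne.symm hne)
  have h1 : (1 : ℚ) < (a : ℚ) / s := by
    rw [lt_div_iff₀ (by exact_mod_cast hs : (0:ℚ) < s)]
    exact_mod_cast by simpa using hlt
  obtain ⟨n, hn⟩ := pow_unbounded_of_one_lt (c : ℚ) h1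
  have h2 : (c : ℚ) * (s : ℚ) ^ n < (a : ℚ) ^ n := by
    rw [div_pow] at hn
    have hsn : (0 : ℚ) < (s : ℚ) ^ n := by positivity
    calc (c : ℚ) * (s : ℚ) ^ n < ((a : ℚ) ^ n / (s : ℚ) ^ n) * (s : ℚ) ^ n := by
          exact mul_lt_mul_of_pos_right hn hsn
      _ = (a : ℚ) ^ n := by field_simp
  have h3 := h n
  have : ((a : ℚ)) ^ n ≤ (c : ℚ) * (s : ℚ) ^ n := by exact_mod_cast h3
  linarith

section Tors
variable {O : Type*} [CommRing O] [IsLocalRing O] {ϖ : O} (hϖ : ϖ ∈ nonunits O)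
variable {T : Type*} [AddCommGroup T] [Module O T]

include hϖ in
lemma aux_elt_tors [Finite T] (t : T) : ∃ n : ℕ, ϖ ^ n • t = 0 := by
  obtain ⟨a, b, hab, heq⟩ := Finite.exists_ne_map_eq_of_infinite (fun n : ℕ => ϖ ^ n • t)
  wlog hlt : a < b generalizing a b
  · exact this b a hab.symm heq.symm (by omega)
  have heq' : ϖ ^ a • t = ϖ ^ b • t := heq
  have hkey : ϖ ^ a • ((1 - ϖ ^ (b - a)) • t) = 0 := by
    rw [sub_smul, one_smul, smul_sub, smul_smul, ← pow_add]
    rw [Nat.add_sub_cancel' hlt.le]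
    rw [heq', sub_self]
  have hu : IsUnit (1 - ϖ ^ (b - a)) := by
    apply IsLocalRing.isUnit_one_sub_self_of_mem_nonunits
    have hba : b - a ≠ 0 := by omega
    obtain ⟨m, hm⟩ := Nat.exists_eq_succ_of_ne_zero hba
    rw [hm]
    intro hunit
    have : IsUnit (ϖ ^ m * ϖ) := by rwa [← pow_succ]
    exact hϖ (isUnit_of_mul_isUnit_right this)
  refine ⟨a, ?_⟩
  obtain ⟨u, hu⟩ := hu
  have := congrArg (fun z => (u⁻¹ : Oˣ) • z) hkey
  simp only [smul_zero] at this
  rw [smul_comm, ← hu, ← Units.smul_def, inv_smul_smul] at this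
  exact this

include hϖ in
lemma aux_unif_tors [Finite T] : ∃ n : ℕ, ∀ t : T, ϖ ^ n • t = 0 := by
  classical
  choose gg hgg using aux_elt_tors hϖ (T := T)
  obtain ⟨n, hn⟩ := (Set.finite_range gg).bddAbove
  refine ⟨n, fun t => ?_⟩
  have h1 : gg t ≤ n := hn ⟨t, rfl⟩
  rw [← Nat.sub_add_cancel h1, pow_add, mul_smul, hgg, smul_zero]

end Tors

section QFacts
variable {O : Type*} [CommRing O] [IsDomain O] [IsDiscreteValuationRing O]
  {ϖ : O} (hϖ : Irreducible ϖ)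
  {K : Type*} [Field K] [Algebra O K] [IsFractionRing O K]

local notation "Q" => K ⧸ LinearMap.range (Algebra.linearMap O K)

include hϖ in
lemma aux_algebraMap_pi_ne (n : ℕ) : algebraMap O K ϖ ^ n ≠ 0 := by
  apply pow_ne_zero
  simpa using (map_ne_zero_iff _ (IsFractionRing.injective O K)).2 hϖ.ne_zero

include hϖ in
lemma aux_Q_div (x : Q) (n : ℕ) : ∃ y : Q, ϖ ^ n • y = x := by
  obtain ⟨k, rfl⟩ := Submodule.Quotient.mk_surjective _ x
  refine ⟨Submodule.Quotient.mk ((algebraMap O K ϖ ^ n)⁻¹ * k), ?_⟩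
  rw [← Submodule.Quotient.mk_smul, Algebra.smul_def, map_pow,
    ← mul_assoc, mul_inv_cancel₀ (aux_algebraMap_pi_ne hϖ n), one_mul]

include hϖ in
lemma aux_Q_tors (x : Q) : ∃ n : ℕ, ϖ ^ n • x = 0 := by
  obtain ⟨k, rfl⟩ := Submodule.Quotient.mk_surjective _ x
  obtain ⟨a, b, hb, rfl⟩ := IsFractionRing.div_surjective (A := O) k
  have hb0 : b ≠ 0 := nonZeroDivisors.ne_zero hb
  obtain ⟨n, u, rfl⟩ := IsDiscreteValuationRing.eq_unit_mul_pow_irreducible hb0 hϖ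
  refine ⟨n, ?_⟩
  rw [← Submodule.Quotient.mk_smul, Submodule.Quotient.mk_eq_zero, Algebra.smul_def, map_pow]
  refine ⟨((u⁻¹ : Oˣ) : O) * a, ?_⟩
  have hden : algebraMap O K ((u : O) * ϖ ^ n) ≠ 0 := by
    refine (map_ne_zero_iff _ (IsFractionRing.injective O K)).2 ?_
    exact mul_ne_zero u.ne_zero (pow_ne_zero _ hϖ.ne_zero)
  have h1 : algebraMap O K (((u⁻¹ : Oˣ) : O) * a) * algebraMap O K ((u : O) * ϖ ^ n)
      = algebraMap O K ϖ ^ n * algebraMap O K a := by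
    rw [← map_mul, ← map_pow, ← map_mul]
    congr 1
    rw [mul_mul_mul_comm, Units.inv_mul, one_mul, mul_comm]
  rw [Algebra.linearMap_apply, mul_div_assoc', eq_div_iff hden, h1]

end QFacts

section QFin
variable {O : Type*} [CommRing O] [IsDomain O] [IsDiscreteValuationRing O]
  [Finite (IsLocalRing.ResidueField O)]
  {ϖ : O} (hϖ : Irreducible ϖ)
  {K : Type*} [Field K] [Algebra O K] [IsFractionRing O K]

local notation "Q" => K ⧸ LinearMap.range (Algebra.linearMap O K)

include hϖ in
lemma aux_Q_tors1_finite : Finite (Submodule.torsionBy O Q ϖ) := by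
  have hpne : algebraMap O K ϖ ≠ 0 := by
    simpa using (map_ne_zero_iff _ (IsFractionRing.injective O K)).2 hϖ.ne_zero
  set ρ : O →ₗ[O] Q :=
    (LinearMap.range (Algebra.linearMap O K)).mkQ.comp
      (LinearMap.toSpanSingleton O K ((algebraMap O K ϖ)⁻¹)) with hρ
  have hρ_apply : ∀ a : O,
      ρ a = Submodule.Quotient.mk (algebraMap O K a * (algebraMap O K ϖ)⁻¹) := by
    intro a
    simp [hρ, LinearMap.toSpanSingleton_apply, Algebra.smul_def, Submodule.mkQ_apply]
  have hrange : LinearMap.range ρ = Submodule.torsionBy O Q ϖ := by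
    apply le_antisymm
    · rintro x ⟨a, rfl⟩
      rw [Submodule.mem_torsionBy_iff, hρ_apply, ← Submodule.Quotient.mk_smul,
        Submodule.Quotient.mk_eq_zero, Algebra.smul_def]
      have : algebraMap O K ϖ * (algebraMap O K a * (algebraMap O K ϖ)⁻¹) = algebraMap O K a := by
        field_simp
      rw [this]
      exact ⟨a, rfl⟩
    · rintro x hx
      obtain ⟨k, rfl⟩ := Submodule.Quotient.mk_surjective _ x
      rw [Submodule.mem_torsionBy_iff, ← Submodule.Quotient.mk_smul,
        Submodule.Quotient.mk_eq_zero, Algebra.smul_def] at hx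
      obtain ⟨a, ha⟩ := hx
      refine ⟨a, ?_⟩
      rw [hρ_apply]
      congr 1
      rw [Algebra.linearMap_apply] at ha
      field_simp
      rw [ha, mul_comm]
  have hker : Ideal.span {ϖ} ≤ LinearMap.ker ρ := by
    rw [Ideal.span_le]
    rintro y ⟨rfl⟩
    simp only [SetLike.mem_coe, LinearMap.mem_ker, hρ_apply, Submodule.Quotient.mk_eq_zero]
    exact ⟨1, by simp [mul_inv_cancel₀ hpne]⟩
  have h1 : Finite (O ⧸ Ideal.span {ϖ}) :=
    Finite.of_equiv (IsLocalRing.ResidueField O) (Ideal.quotEquivOfEq hϖ.maximalIdeal_eq).toEquiv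
  have h2 : Finite (O ⧸ LinearMap.ker ρ) := by
    have hsurj : Function.Surjective
        (Submodule.mapQ (Ideal.span {ϖ}) (LinearMap.ker ρ) LinearMap.id hker) := by
      intro x
      obtain ⟨a, rfl⟩ := Submodule.Quotient.mk_surjective _ x
      exact ⟨Submodule.Quotient.mk a, by rw [Submodule.mapQ_apply, LinearMap.id_apply]⟩
    exact Finite.of_surjective _ hsurj
  have := Finite.of_equiv _ (ρ.quotKerEquivRange).toEquiv
  rw [hrange] at this
  exact this

include hϖ in
lemma aux_Q_torsn_finite (n : ℕ) : Finite (Submodule.torsionBy O Q (ϖ ^ n)) := by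
  induction n with
  | zero =>
    have : Subsingleton (Submodule.torsionBy O Q ((ϖ : O) ^ 0)) := by
      constructor
      rintro ⟨x, hx⟩ ⟨y, hy⟩
      rw [Submodule.mem_torsionBy_iff, pow_zero, one_smul] at hx hy
      simp only [Subtype.mk.injEq]; rw [hx, hy]
    exact Finite.of_subsingleton
  | succ n ih =>
    have h1 : Finite (Submodule.torsionBy O Q ϖ) := aux_Q_tors1_finite hϖ
    refine aux_finite_of_addHom (H := Submodule.torsionBy O Q (ϖ ^ n)) ?_ ?_
    · refine { toFun := fun x => ⟨ϖ • (x : Q), ?_⟩, map_zero' := ?_, map_add' := ?_ }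
      · rw [Submodule.mem_torsionBy_iff, smul_smul, ← pow_succ]
        exact x.2
      · ext; simp
      · intro x y; ext; simp [smul_add]
    · refine Finite.of_injective (β := Submodule.torsionBy O Q ϖ)
        (fun x => ⟨(x : Q), ?_⟩) ?_
      · have := x.2
        rw [AddMonoidHom.mem_ker] at this
        have h2 : ϖ • ((x : Submodule.torsionBy O Q (ϖ ^ (n+1))) : Q) = 0 := by
          exact congrArg Subtype.val this
        rwa [Submodule.mem_torsionBy_iff]
      · intro x y h
        have := congrArg Subtype.val h
        simp only [Subtype.mk.injEq] at this
        exact Subtype.ext (Subtype.ext this)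

end QFin

lemma aux_smul_kill {O V : Type*} [CommRing O] [AddCommGroup V] [Module O V] (ϖ : O)
    (m k : ℕ) (v : V) (hk : k ≤ m) (h0 : ϖ ^ k • v = 0) : ϖ ^ m • v = 0 := by
  rw [← Nat.sub_add_cancel hk, pow_add, mul_smul, h0, smul_zero]

set_option maxHeartbeats 1000000 in
theorem stmt_2 (O : Type*) [CommRing O] [IsDomain O] [IsDiscreteValuationRing O]
    [IsAdicComplete (IsLocalRing.maximalIdeal O) O]
    [Finite (IsLocalRing.ResidueField O)]
    (ϖ : O) (hϖ : Irreducible ϖ)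
    (K : Type*) [Field K] [Algebra O K] [IsFractionRing O K]
    (M : Type*) [AddCommGroup M] [Module O M]
    (d : ℕ) (T : Type*) [AddCommGroup T] [Module O T] [Finite T]
    (iso : M ≃ₗ[O] (Fin d → K ⧸ LinearMap.range (Algebra.linearMap O K)) × T)
    (f : M →ₗ[O] M) (hker : Finite (LinearMap.ker f)) :
    Finite (M ⧸ LinearMap.range f) ∧
      Nat.card (M ⧸ LinearMap.range f) ≤ Nat.card T := by
  classical
  set Qm := K ⧸ LinearMap.range (Algebra.linearMap O K) with hQm
  set N := (Fin d → Qm) × T with hN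
  set g : N →ₗ[O] N := (iso : M →ₗ[O] N) ∘ₗ f ∘ₗ (iso.symm : N →ₗ[O] M) with hg
  have hϖnu : ϖ ∈ nonunits O := hϖ.not_isUnit
  -- kernel of g is finite
  have hkerg : Finite (LinearMap.ker g) := by
    refine Finite.of_injective (β := LinearMap.ker f) (fun x => ⟨iso.symm x, ?_⟩) ?_
    · have hx : g (x : N) = 0 := x.2
      have h1 : iso (f (iso.symm (x : N))) = 0 := hx
      have h2 := congrArg iso.symm h1
      simpa using h2
    · intro x y h
      have := congrArg Subtype.val h
      simp only [Subtype.mk.injEq] at this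
      exact Subtype.ext (iso.symm.injective this)
  -- divisibility of Q by ϖ
  have hQdiv : ∀ x : Qm, ∃ y : Qm, ϖ • y = x := by
    intro x
    obtain ⟨y, hy⟩ := aux_Q_div hϖ x 1
    exact ⟨y, by rwa [pow_one] at hy⟩
  -- uniform torsion of T
  obtain ⟨n₀, hn₀⟩ := aux_unif_tors hϖnu (T := T)
  -- N is torsion
  have hNtors : ∀ x : N, ∃ n : ℕ, ϖ ^ n • x = 0 := by
    rintro ⟨p, t⟩
    choose gg hgg using fun i => aux_Q_tors hϖ (p i)
    refine ⟨max (Finset.univ.sup gg) n₀, ?_⟩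
    have h1 : (ϖ ^ max (Finset.univ.sup gg) n₀ • (p, t)).1 = 0 := by
      funext i
      show ϖ ^ max (Finset.univ.sup gg) n₀ • p i = 0
      exact aux_smul_kill ϖ _ _ _ (le_trans (Finset.le_sup (Finset.mem_univ i)) (le_max_left _ _)) (hgg i)
    have h2 : (ϖ ^ max (Finset.univ.sup gg) n₀ • (p, t)).2 = 0 :=
      aux_smul_kill ϖ _ _ _ (le_max_right _ _) (hn₀ t)
    exact Prod.ext h1 h2
  -- the divisible part D and its image S
  set D : Submodule O N := (⊤ : Submodule O (Fin d → Qm)).prod ⊥ with hD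
  have hmemD : ∀ x : N, x ∈ D ↔ x.2 = 0 := by
    intro x
    rw [hD, Submodule.mem_prod]
    simp
  have hDdiv : ∀ x ∈ D, ∃ y ∈ D, ϖ • y = x := by
    intro x hx
    choose yy hyy using fun i => hQdiv (x.1 i)
    refine ⟨(yy, 0), (hmemD _).2 rfl, ?_⟩
    have h2 : x.2 = 0 := (hmemD _).1 hx
    have : ϖ • ((yy, 0) : N) = (ϖ • yy, 0) := by
      simp [Prod.smul_mk]
    rw [this]
    refine Prod.ext ?_ h2.symm
    funext i
    exact hyy i
  have hDdivpow : ∀ (n : ℕ), ∀ x ∈ D, ∃ y ∈ D, ϖ ^ n • y = x := by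
    intro n
    induction n with
    | zero => exact fun x hx => ⟨x, hx, by rw [pow_zero, one_smul]⟩
    | succ n ih =>
      intro x hx
      obtain ⟨y, hy, hyx⟩ := ih x hx
      obtain ⟨z, hz, hzy⟩ := hDdiv y hy
      exact ⟨z, hz, by rw [pow_succ, mul_smul, hzy, hyx]⟩
  have hgD : ∀ x ∈ D, g x ∈ D := by
    intro x hx
    obtain ⟨y, hyD, hy⟩ := hDdivpow n₀ x hx
    rw [hmemD, ← hy, map_smul]
    show (ϖ ^ n₀ • g y).2 = 0
    have : (ϖ ^ n₀ • g y).2 = ϖ ^ n₀ • (g y).2 := rfl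
    rw [this]
    exact hn₀ _
  set S : Submodule O N := D.map g with hS
  have hSleD : S ≤ D := by
    rintro _ ⟨x, hx, rfl⟩
    exact hgD x hx
  have hSdiv : ∀ x ∈ S, ∃ y ∈ S, ϖ • y = x := by
    rintro _ ⟨x, hx, rfl⟩
    obtain ⟨z, hz, hzx⟩ := hDdiv x hx
    exact ⟨g z, Submodule.mem_map_of_mem hz, by rw [← map_smul, hzx]⟩
  -- finiteness of torsion levels
  have hA_fin : ∀ n : ℕ, Finite ↥(D ⊓ Submodule.torsionBy O N (ϖ ^ n)) := by
    intro n
    have hQfin : Finite (Submodule.torsionBy O Qm (ϖ ^ n)) := aux_Q_torsn_finite hϖ n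
    refine Finite.of_injective
      (β := Fin d → ↥(Submodule.torsionBy O Qm (ϖ ^ n)))
      (fun x => fun i => ⟨(x : N).1 i, ?_⟩) ?_
    · rcases (aux_mem_inf_tors _ _ _).1 x.2 with ⟨h1, h2⟩
      rw [Submodule.mem_torsionBy_iff]
      have h3 : (ϖ ^ n • (x : N)).1 i = 0 := by rw [h2]; rfl
      exact h3
    · intro x y h
      have h1 : (x : N).1 = (y : N).1 := by
        funext i
        have := congrArg Subtype.val (congrFun h i)
        simpa using this
      have h2 : (x : N).2 = 0 := (hmemD _).1 ((Submodule.mem_inf.1 x.2).1)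
      have h2' : (y : N).2 = 0 := (hmemD _).1 ((Submodule.mem_inf.1 y.2).1)
      exact Subtype.ext (Prod.ext h1 (h2.trans h2'.symm))
  have hS_fin : ∀ n : ℕ, Finite ↥(S ⊓ Submodule.torsionBy O N (ϖ ^ n)) := by
    intro n
    have := hA_fin n
    refine Finite.of_injective
      (β := ↥(D ⊓ Submodule.torsionBy O N (ϖ ^ n)))
      (fun x => ⟨(x : N), ?_⟩) ?_
    · rcases (aux_mem_inf_tors _ _ _).1 x.2 with ⟨h1, h2⟩
      exact (aux_mem_inf_tors _ _ _).2 ⟨hSleD h1, h2⟩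
    · intro x y h
      have := congrArg Subtype.val h
      simp only [Subtype.mk.injEq] at this
      exact Subtype.ext this
  -- the counting inequality
  have hcount : ∀ n : ℕ,
      Nat.card ↥(D ⊓ Submodule.torsionBy O N (ϖ ^ n)) ≤
        Nat.card (LinearMap.ker g) * Nat.card ↥(S ⊓ Submodule.torsionBy O N (ϖ ^ n)) := by
    intro n
    have hAf := hA_fin n
    have hSf := hS_fin n
    set ψ : ↥(D ⊓ Submodule.torsionBy O N (ϖ ^ n)) →+
        ↥(S ⊓ Submodule.torsionBy O N (ϖ ^ n)) :=
      { toFun := fun x => ⟨g (x : N), by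
          rcases (aux_mem_inf_tors _ _ _).1 x.2 with ⟨h1, h2⟩
          refine (aux_mem_inf_tors _ _ _).2 ⟨Submodule.mem_map_of_mem h1, ?_⟩
          rw [← map_smul, h2, map_zero]⟩,
        map_zero' := Subtype.ext (by simp)
        map_add' := fun x y => Subtype.ext (by simp) } with hψ
    have hcard1 : Nat.card ↥(D ⊓ Submodule.torsionBy O N (ϖ ^ n)) =
        Nat.card (↥(D ⊓ Submodule.torsionBy O N (ϖ ^ n)) ⧸ ψ.ker) * Nat.card ψ.ker :=
      AddSubgroup.card_eq_card_quotient_mul_card_addSubgroup ψ.ker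
    have hq : Nat.card (↥(D ⊓ Submodule.torsionBy O N (ϖ ^ n)) ⧸ ψ.ker) ≤
        Nat.card ↥(S ⊓ Submodule.torsionBy O N (ϖ ^ n)) := by
      have e := QuotientAddGroup.quotientKerEquivRange ψ
      rw [Nat.card_congr e.toEquiv]
      exact Nat.card_le_card_of_injective Subtype.val Subtype.val_injective
    have hk : Nat.card ψ.ker ≤ Nat.card (LinearMap.ker g) := by
      have hmem : ∀ x : ψ.ker,
          ((x : ↥(D ⊓ Submodule.torsionBy O N (ϖ ^ n))) : N) ∈ LinearMap.ker g := by
        intro x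
        have hx : ψ (x : ↥(D ⊓ Submodule.torsionBy O N (ϖ ^ n))) = 0 := x.2
        have h2 : g (((x : ↥(D ⊓ Submodule.torsionBy O N (ϖ ^ n))) : N)) = 0 :=
          congrArg Subtype.val hx
        exact LinearMap.mem_ker.2 h2
      refine Nat.card_le_card_of_injective
        (fun x => (⟨_, hmem x⟩ : LinearMap.ker g)) ?_
      intro x y h
      have := congrArg Subtype.val h
      simp only [Subtype.mk.injEq] at this
      exact Subtype.ext (Subtype.ext this)
    calc Nat.card ↥(D ⊓ Submodule.torsionBy O N (ϖ ^ n))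
        = Nat.card (↥(D ⊓ Submodule.torsionBy O N (ϖ ^ n)) ⧸ ψ.ker) * Nat.card ψ.ker :=
          hcard1
      _ ≤ Nat.card ↥(S ⊓ Submodule.torsionBy O N (ϖ ^ n)) * Nat.card (LinearMap.ker g) :=
          Nat.mul_le_mul hq hk
      _ = Nat.card (LinearMap.ker g) * Nat.card ↥(S ⊓ Submodule.torsionBy O N (ϖ ^ n)) :=
          mul_comm _ _
  -- conclude S ⊓ torsion = D ⊓ torsion
  have hApow := aux_pow D hDdiv
  have hSpow := aux_pow S hSdiv
  have hs1 : 1 ≤ Nat.card ↥(S ⊓ Submodule.torsionBy O N (ϖ ^ 1)) := by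
    have := hS_fin 1
    have : 0 < Nat.card ↥(S ⊓ Submodule.torsionBy O N (ϖ ^ 1)) := Nat.card_pos
    omega
  have hsa : Nat.card ↥(S ⊓ Submodule.torsionBy O N (ϖ ^ 1)) ≤
      Nat.card ↥(D ⊓ Submodule.torsionBy O N (ϖ ^ 1)) := by
    have := hA_fin 1
    refine Nat.card_le_card_of_injective
      (fun x => (⟨(x : N), ?_⟩ : ↥(D ⊓ Submodule.torsionBy O N (ϖ ^ 1)))) ?_
    · rcases (aux_mem_inf_tors _ _ _).1 x.2 with ⟨h1, h2⟩
      exact (aux_mem_inf_tors _ _ _).2 ⟨hSleD h1, h2⟩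
    · intro x y h
      have := congrArg Subtype.val h
      simp only [Subtype.mk.injEq] at this
      exact Subtype.ext this
  have haseq : Nat.card ↥(D ⊓ Submodule.torsionBy O N (ϖ ^ 1)) =
      Nat.card ↥(S ⊓ Submodule.torsionBy O N (ϖ ^ 1)) := by
    refine aux_nat_eq _ _ (Nat.card (LinearMap.ker g)) hs1 hsa ?_
    intro n
    have h1 := hcount n
    rw [hApow n, hSpow n] at h1
    exact h1
  have hSeqD : ∀ n : ℕ,
      (S ⊓ Submodule.torsionBy O N (ϖ ^ n) : Submodule O N) =
        D ⊓ Submodule.torsionBy O N (ϖ ^ n) := by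
    intro n
    have hAf := hA_fin n
    have hSf := hS_fin n
    have hsub : ((S ⊓ Submodule.torsionBy O N (ϖ ^ n) : Submodule O N) : Set N) ⊆
        ((D ⊓ Submodule.torsionBy O N (ϖ ^ n) : Submodule O N) : Set N) := by
      intro x hx
      rcases (aux_mem_inf_tors _ _ _).1 hx with ⟨h1, h2⟩
      exact (aux_mem_inf_tors _ _ _).2 ⟨hSleD h1, h2⟩
    have hcardle : ((D ⊓ Submodule.torsionBy O N (ϖ ^ n) : Submodule O N) : Set N).ncard ≤
        ((S ⊓ Submodule.torsionBy O N (ϖ ^ n) : Submodule O N) : Set N).ncard := by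
      rw [← Nat.card_coe_set_eq, ← Nat.card_coe_set_eq]
      have e1 : Nat.card ↥((D ⊓ Submodule.torsionBy O N (ϖ ^ n) : Submodule O N) : Set N) =
          Nat.card ↥(D ⊓ Submodule.torsionBy O N (ϖ ^ n)) := rfl
      have e2 : Nat.card ↥((S ⊓ Submodule.torsionBy O N (ϖ ^ n) : Submodule O N) : Set N) =
          Nat.card ↥(S ⊓ Submodule.torsionBy O N (ϖ ^ n)) := rfl
      rw [e1, e2, hApow n, hSpow n, haseq]
    have hfin : ((D ⊓ Submodule.torsionBy O N (ϖ ^ n) : Submodule O N) : Set N).Finite :=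
      Set.toFinite _
    have := Set.eq_of_subset_of_ncard_le hsub hcardle hfin
    exact SetLike.ext' this
  -- D is contained in the range of g
  have hDle : D ≤ LinearMap.range g := by
    intro x hx
    obtain ⟨n, hn⟩ := hNtors x
    have hxA : x ∈ D ⊓ Submodule.torsionBy O N (ϖ ^ n) :=
      (aux_mem_inf_tors _ _ _).2 ⟨hx, hn⟩
    rw [← hSeqD n] at hxA
    obtain ⟨y, hy, rfl⟩ := Submodule.mem_map.1 (Submodule.mem_inf.1 hxA).1
    exact ⟨y, rfl⟩
  -- the cokernel of g is a quotient of T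
  have hFsurj : Function.Surjective
      (fun t : T => Submodule.Quotient.mk (p := LinearMap.range g) (((0 : Fin d → Qm), t) : N)) := by
    intro x
    obtain ⟨z, rfl⟩ := Submodule.Quotient.mk_surjective _ x
    refine ⟨z.2, ?_⟩
    rw [Submodule.Quotient.eq]
    apply hDle
    rw [hmemD]
    exact sub_self z.2
  have hfinN : Finite (N ⧸ LinearMap.range g) := Finite.of_surjective _ hFsurj
  have hcardN : Nat.card (N ⧸ LinearMap.range g) ≤ Nat.card T :=
    Nat.card_le_card_of_surjective _ hFsurj
  -- transfer back to M
  have hmap : (LinearMap.range f).map (iso : M →ₗ[O] N) = LinearMap.range g := by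
    have h1 : LinearMap.range (f ∘ₗ (iso.symm : N →ₗ[O] M)) = LinearMap.range f :=
      LinearMap.range_comp_of_range_eq_top f iso.symm.range
    calc (LinearMap.range f).map (iso : M →ₗ[O] N)
        = LinearMap.range ((iso : M →ₗ[O] N) ∘ₗ (f ∘ₗ (iso.symm : N →ₗ[O] M))) := by
          rw [LinearMap.range_comp, h1]
      _ = LinearMap.range g := rfl
  have e : (M ⧸ LinearMap.range f) ≃ₗ[O] N ⧸ LinearMap.range g :=
    Submodule.Quotient.equiv (LinearMap.range f) (LinearMap.range g) iso hmap
  refine ⟨Finite.of_equiv _ e.symm.toEquiv, ?_⟩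
  rw [Nat.card_congr e.toEquiv]
  exact hcardN
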